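/- Let X_1, …, X_n be independent random vectors in ℝ^d where each X_k is distributed according to a probabilistic tight frame μ_k with finite 4-th moment N_k = ∫‖y‖⁴ dμ_k(y). Then E‖(1/n)∑_{k=1}^n X_k X_k^T − (L/d)·I_d‖_F² = (1/n)(N − L̃/d), where L_k = ∫‖y‖² dμ_k(y), L = (1/n)∑_k L_k, L̃ = (1/n)∑_k L_k², and N = (1/n)∑_k N_k, and ‖·‖_F is the Frobenius norm. -/

import Mathlib

open MeasureTheory ProbabilityTheory RealInnerProductSpace

lemma norm_sq_eq_sum {d : ℕ} (y : EuclideanSpace ℝ (Fin d)) : ‖y‖ ^ 2 = ∑ i, y i ^ 2 := by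
  rw [EuclideanSpace.norm_eq, Real.sq_sqrt (by positivity)]
  simp [sq_abs]

lemma coord_sq_le {d : ℕ} (y : EuclideanSpace ℝ (Fin d)) (i : Fin d) : y i ^ 2 ≤ ‖y‖ ^ 2 := by
  rw [norm_sq_eq_sum]
  exact Finset.single_le_sum (fun j _ => sq_nonneg (y j)) (Finset.mem_univ i)

lemma abs_coord_le {d : ℕ} (y : EuclideanSpace ℝ (Fin d)) (i : Fin d) : |y i| ≤ ‖y‖ := by
  have := coord_sq_le y i
  have h2 := Real.sqrt_le_sqrt this
  rwa [Real.sqrt_sq_eq_abs, Real.sqrt_sq (norm_nonneg y)] at h2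

lemma meas_coord {d : ℕ} (i : Fin d) : Measurable (fun y : EuclideanSpace ℝ (Fin d) => y i) :=
  (EuclideanSpace.proj i).continuous.measurable

section
variable {d : ℕ} {ν : Measure (EuclideanSpace ℝ (Fin d))} [IsProbabilityMeasure ν]

lemma int_norm_sq (hmom : Integrable (fun y : EuclideanSpace ℝ (Fin d) => ‖y‖ ^ 4) ν) :
    Integrable (fun y : EuclideanSpace ℝ (Fin d) => ‖y‖ ^ 2) ν := by
  refine ((integrable_const (1:ℝ)).add hmom).mono
    (measurable_norm.pow_const 2).aestronglyMeasurable ?_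
  filter_upwards with y
  simp only [Pi.add_apply, Real.norm_eq_abs]
  rw [abs_of_nonneg (by positivity), abs_of_nonneg (by positivity)]
  nlinarith [sq_nonneg (‖y‖^2 - 1), norm_nonneg y]

lemma int_coord_mul (hmom : Integrable (fun y : EuclideanSpace ℝ (Fin d) => ‖y‖ ^ 4) ν)
    (i j : Fin d) : Integrable (fun y : EuclideanSpace ℝ (Fin d) => y i * y j) ν := by
  refine (int_norm_sq hmom).mono ((meas_coord i).mul (meas_coord j)).aestronglyMeasurable ?_
  filter_upwards with y
  rw [Real.norm_eq_abs, Real.norm_eq_abs, abs_of_nonneg (sq_nonneg ‖y‖), abs_mul, sq]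
  exact mul_le_mul (abs_coord_le y i) (abs_coord_le y j) (abs_nonneg _) (norm_nonneg y)

lemma int_coord_mul_sq (hmom : Integrable (fun y : EuclideanSpace ℝ (Fin d) => ‖y‖ ^ 4) ν)
    (i j : Fin d) : Integrable (fun y : EuclideanSpace ℝ (Fin d) => (y i * y j) ^ 2) ν := by
  refine hmom.mono (((meas_coord i).mul (meas_coord j)).pow_const 2).aestronglyMeasurable ?_
  filter_upwards with y
  rw [Real.norm_eq_abs, Real.norm_eq_abs, abs_of_nonneg (sq_nonneg _),
    abs_of_nonneg (by positivity)]
  have hi := coord_sq_le y i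
  have hj := coord_sq_le y j
  calc (y i * y j)^2 = y i ^2 * y j ^2 := by ring
    _ ≤ ‖y‖^2 * ‖y‖^2 := mul_le_mul hi hj (sq_nonneg _) (sq_nonneg _)
    _ = ‖y‖ ^ 4 := by ring

lemma frame_mean {d : ℕ} (hd : 0 < d) {ν : Measure (EuclideanSpace ℝ (Fin d))}
    [IsProbabilityMeasure ν] {A : ℝ}
    (hA : ∀ x : EuclideanSpace ℝ (Fin d), (∫ y, ⟪x, y⟫ ^ 2 ∂ν) = A * ‖x‖ ^ 2)
    (hmom : Integrable (fun y : EuclideanSpace ℝ (Fin d) => ‖y‖ ^ 4) ν) (i j : Fin d) :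
    (∫ y, y i * y j ∂ν) = if i = j then (∫ y, ‖y‖ ^ 2 ∂ν) / d else 0 := by
  have hsq : ∀ i : Fin d, (∫ y, y i ^ 2 ∂ν) = A := by
    intro i
    have := hA (EuclideanSpace.single i (1:ℝ))
    simpa [EuclideanSpace.inner_single_left] using this
  have hL : (∫ y, ‖y‖ ^ 2 ∂ν) = d * A := by
    have : (∫ y, ‖y‖ ^ 2 ∂ν) = ∑ i : Fin d, ∫ y, y i ^ 2 ∂ν := by
      rw [← integral_finset_sum]
      · exact integral_congr_ae (by filter_upwards with y using norm_sq_eq_sum y)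
      · intro i _
        simpa [sq] using int_coord_mul hmom i i
    rw [this]
    simp [hsq]
  rcases eq_or_ne i j with rfl | hij
  · rw [if_pos rfl]
    have : (∫ y, y i * y i ∂ν) = A := by simpa [sq] using hsq i
    rw [this, hL]
    field_simp
  · simp only [if_neg hij]
    have hx := hA (EuclideanSpace.single i (1:ℝ) + EuclideanSpace.single j (1:ℝ))
    have hnorm : ‖EuclideanSpace.single i (1:ℝ) + EuclideanSpace.single j (1:ℝ)‖ ^ 2 = 2 := by
      rw [norm_add_sq_real]
      simp [EuclideanSpace.inner_single_left, EuclideanSpace.single_apply, hij.symm]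
      norm_num
    have hinner : ∀ y : EuclideanSpace ℝ (Fin d),
        ⟪EuclideanSpace.single i (1:ℝ) + EuclideanSpace.single j (1:ℝ), y⟫ = y i + y j := by
      intro y; simp [inner_add_left, EuclideanSpace.inner_single_left]
    rw [hnorm] at hx
    have hexp : (∫ y, (⟪EuclideanSpace.single i (1:ℝ) + EuclideanSpace.single j (1:ℝ), y⟫:ℝ) ^ 2 ∂ν)
        = (∫ y, y i ^2 ∂ν) + 2 * (∫ y, y i * y j ∂ν) + (∫ y, y j ^2 ∂ν) := by
      have : ∀ y : EuclideanSpace ℝ (Fin d),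
          (⟪EuclideanSpace.single i (1:ℝ) + EuclideanSpace.single j (1:ℝ), y⟫:ℝ) ^ 2
          = y i ^2 + 2 * (y i * y j) + y j ^2 := by
        intro y; rw [hinner y]; ring
      rw [integral_congr_ae (Filter.Eventually.of_forall this)]
      have h1 : Integrable (fun y : EuclideanSpace ℝ (Fin d) => y i ^ 2) ν := by
        simpa [sq] using int_coord_mul hmom i i
      have h2 : Integrable (fun y : EuclideanSpace ℝ (Fin d) => 2 * (y i * y j)) ν :=
        (int_coord_mul hmom i j).const_mul 2
      have h3 : Integrable (fun y : EuclideanSpace ℝ (Fin d) => y j ^ 2) ν := by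
        simpa [sq] using int_coord_mul hmom j j
      have h12 : Integrable (fun y : EuclideanSpace ℝ (Fin d) => y i ^ 2 + 2 * (y i * y j)) ν :=
        h1.add h2
      rw [integral_add h12 h3, integral_add h1 h2, integral_const_mul]
    rw [hexp, hsq i, hsq j] at hx
    linarith

lemma sum_int_sq (hmom : Integrable (fun y : EuclideanSpace ℝ (Fin d) => ‖y‖ ^ 4) ν) :
    ∑ i, ∑ j, ∫ y, (y i * y j) ^ 2 ∂ν = ∫ y, ‖y‖ ^ 4 ∂ν := by
  have step : ∀ i : Fin d, ∑ j, ∫ y, (y i * y j) ^ 2 ∂ν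
      = ∫ y, ∑ j, (y i * y j) ^ 2 ∂ν := by
    intro i
    rw [integral_finset_sum _ (fun j _ => int_coord_mul_sq hmom i j)]
  simp only [step]
  rw [← integral_finset_sum _ (fun i _ =>
    integrable_finset_sum _ (fun j _ => int_coord_mul_sq hmom i j))]
  refine integral_congr_ae (Filter.Eventually.of_forall fun y => ?_)
  have h2 := norm_sq_eq_sum y
  calc ∑ i, ∑ j, (y i * y j) ^ 2 = (∑ i, y i ^2) * (∑ j, y j ^2) := by
        rw [Finset.sum_mul_sum]
        exact Finset.sum_congr rfl fun i _ => Finset.sum_congr rfl fun j _ => by ring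
    _ = ‖y‖^2 * ‖y‖^2 := by rw [← h2]
    _ = ‖y‖ ^ 4 := by ring

lemma int_sub_const_sq (hmom : Integrable (fun y : EuclideanSpace ℝ (Fin d) => ‖y‖ ^ 4) ν)
    (i j : Fin d) (m : ℝ) :
    Integrable (fun y : EuclideanSpace ℝ (Fin d) => (y i * y j - m) ^ 2) ν ∧
    (∫ y, (y i * y j - m) ^ 2 ∂ν) =
      (∫ y, (y i * y j) ^ 2 ∂ν) - 2 * m * (∫ y, y i * y j ∂ν) + m ^ 2 := by
  have h1 := int_coord_mul_sq hmom i j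
  have h2 : Integrable (fun y : EuclideanSpace ℝ (Fin d) => -(2 * m) * (y i * y j)) ν :=
    (int_coord_mul hmom i j).const_mul _
  have h3 : Integrable (fun y : EuclideanSpace ℝ (Fin d) => (m:ℝ)^2) ν := integrable_const _
  have hEq : ∀ y : EuclideanSpace ℝ (Fin d),
      (y i * y j - m) ^ 2 = (y i * y j) ^2 + (-(2*m) * (y i * y j)) + m^2 := by
    intro y; ring
  constructor
  · refine ((h1.add h2).add h3).congr ?_
    filter_upwards with y using (hEq y).symm
  · have h12 : Integrable
        (fun y : EuclideanSpace ℝ (Fin d) => (y i * y j) ^2 + -(2*m) * (y i * y j)) ν := h1.add h2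
    rw [integral_congr_ae (Filter.Eventually.of_forall hEq),
      integral_add h12 h3, integral_add h1 h2, integral_const_mul]
    simp [measure_univ]
    ring
end

/-- Random vectors independently distributed according to probabilistic tight frames with
finite fourth moments: mean squared distance of the scaled frame operator to `(L/d)·I_d`. -/
theorem stmt_8 {d n : ℕ} (hd : 0 < d) (hn : 0 < n)
    {Ω : Type*} [MeasurableSpace Ω] (P : Measure Ω) [IsProbabilityMeasure P]
    (μ : Fin n → Measure (EuclideanSpace ℝ (Fin d)))
    [∀ k, IsProbabilityMeasure (μ k)]
    (X : Fin n → Ω → EuclideanSpace ℝ (Fin d))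
    (hmeas : ∀ k, Measurable (X k))
    (hindep : iIndepFun X P)
    (hlaw : ∀ k, Measure.map (X k) P = μ k)
    (htight : ∀ k, ∃ A : ℝ, 0 < A ∧
      ∀ x : EuclideanSpace ℝ (Fin d), (∫ y, ⟪x, y⟫ ^ 2 ∂μ k) = A * ‖x‖ ^ 2)
    (hmom : ∀ k, Integrable (fun y : EuclideanSpace ℝ (Fin d) => ‖y‖ ^ 4) (μ k)) :
    (∫ ω, ∑ i, ∑ j,
        (((n : ℝ)⁻¹ * ∑ k, X k ω i * X k ω j) -
          (if i = j then ((n : ℝ)⁻¹ * ∑ k, ∫ y, ‖y‖ ^ 2 ∂μ k) / d else 0)) ^ 2 ∂P) =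
      (n : ℝ)⁻¹ * (((n : ℝ)⁻¹ * ∑ k, ∫ y, ‖y‖ ^ 4 ∂μ k) -
        ((n : ℝ)⁻¹ * ∑ k, (∫ y, ‖y‖ ^ 2 ∂μ k) ^ 2) / d) := by
  classical
  set L : Fin n → ℝ := fun k => ∫ y, ‖y‖ ^ 2 ∂μ k with hL
  set m : Fin n → Fin d → Fin d → ℝ := fun k i j => if i = j then L k / d else 0 with hm
  have hgmeas : ∀ i j : Fin d, Measurable (fun y : EuclideanSpace ℝ (Fin d) => y i * y j) :=
    fun i j => (meas_coord i).mul (meas_coord j)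
  -- transfer of integrals along the law
  have hmap : ∀ (k : Fin n) (g : EuclideanSpace ℝ (Fin d) → ℝ), Measurable g →
      (∫ ω, g (X k ω) ∂P) = ∫ y, g y ∂μ k := by
    intro k g hg
    rw [← hlaw k, integral_map (hmeas k).aemeasurable hg.aestronglyMeasurable]
  have hmapint : ∀ (k : Fin n) (g : EuclideanSpace ℝ (Fin d) → ℝ), Measurable g →
      Integrable g (μ k) → Integrable (fun ω => g (X k ω)) P := by
    intro k g hg hgint
    exact (integrable_map_measure hg.aestronglyMeasurable (hmeas k).aemeasurable).mp
      (by rwa [hlaw k])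
  -- means
  have hmean : ∀ (k : Fin n) (i j : Fin d), (∫ y, y i * y j ∂μ k) = m k i j := by
    intro k i j
    obtain ⟨A, _, hA⟩ := htight k
    simp only [hm, hL]
    exact frame_mean hd hA (hmom k) i j
  -- integrability on Ω
  have hZint : ∀ (k : Fin n) (i j : Fin d), Integrable (fun ω => X k ω i * X k ω j) P :=
    fun k i j => hmapint k _ (hgmeas i j) (int_coord_mul (hmom k) i j)
  have hWint : ∀ (k : Fin n) (i j : Fin d),
      Integrable (fun ω => X k ω i * X k ω j - m k i j) P :=
    fun k i j => (hZint k i j).sub (integrable_const _)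
  have hZmean : ∀ (k : Fin n) (i j : Fin d), (∫ ω, X k ω i * X k ω j ∂P) = m k i j := by
    intro k i j
    have h : (∫ ω, X k ω i * X k ω j ∂P) = ∫ y, y i * y j ∂μ k := hmap k _ (hgmeas i j)
    rw [h, hmean]
  have hWmean : ∀ (k : Fin n) (i j : Fin d),
      (∫ ω, (X k ω i * X k ω j - m k i j) ∂P) = 0 := by
    intro k i j
    rw [integral_sub (hZint k i j) (integrable_const _), integral_const, hZmean k i j]
    simp
  have hWmeas : ∀ (k : Fin n) (i j : Fin d),
      Measurable (fun ω => X k ω i * X k ω j - m k i j) := by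
    intro k i j
    exact ((((meas_coord i).comp (hmeas k)).mul ((meas_coord j).comp (hmeas k))).sub
      measurable_const)
  -- second moment of each W
  have hWsq : ∀ (k : Fin n) (i j : Fin d),
      Integrable (fun ω => (X k ω i * X k ω j - m k i j) ^ 2) P ∧
      (∫ ω, (X k ω i * X k ω j - m k i j) ^ 2 ∂P)
        = (∫ y, (y i * y j) ^ 2 ∂μ k) - m k i j ^ 2 := by
    intro k i j
    obtain ⟨hint, heq⟩ := int_sub_const_sq (hmom k) i j (m k i j)
    have hgm : Measurable (fun y : EuclideanSpace ℝ (Fin d) => (y i * y j - m k i j) ^ 2) :=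
      ((hgmeas i j).sub measurable_const).pow_const 2
    constructor
    · exact hmapint k _ hgm hint
    · have h1 : (∫ ω, (X k ω i * X k ω j - m k i j) ^ 2 ∂P)
          = ∫ y, (y i * y j - m k i j) ^ 2 ∂μ k := hmap k _ hgm
      rw [h1, heq, hmean k i j]
      ring
  -- independence of distinct W's
  have hindepW : ∀ (i j : Fin d) (k l : Fin n), k ≠ l →
      IndepFun (fun ω => X k ω i * X k ω j - m k i j)
        (fun ω => X l ω i * X l ω j - m l i j) P := by
    intro i j k l hkl
    exact (hindep.indepFun hkl).comp
      (((meas_coord i).mul (meas_coord j)).sub measurable_const)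
      (((meas_coord i).mul (meas_coord j)).sub measurable_const)
  have hcross : ∀ (i j : Fin d) (k l : Fin n), k ≠ l →
      (∫ ω, (X k ω i * X k ω j - m k i j) * (X l ω i * X l ω j - m l i j) ∂P) = 0 := by
    intro i j k l hkl
    have h := (hindepW i j k l hkl).integral_mul_eq_mul_integral (hWmeas k i j).aestronglyMeasurable
      (hWmeas l i j).aestronglyMeasurable
    have h' : (∫ ω, (X k ω i * X k ω j - m k i j) * (X l ω i * X l ω j - m l i j) ∂P)
        = (∫ ω, (X k ω i * X k ω j - m k i j) ∂P) *
          (∫ ω, (X l ω i * X l ω j - m l i j) ∂P) := h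
    rw [h', hWmean k i j, hWmean l i j, mul_zero]
  -- integrability of all summands
  have hsummandint : ∀ (i j : Fin d) (k l : Fin n),
      Integrable (fun ω => ((n : ℝ)⁻¹ * (n : ℝ)⁻¹) *
        ((X k ω i * X k ω j - m k i j) * (X l ω i * X l ω j - m l i j))) P := by
    intro i j k l
    rcases eq_or_ne k l with rfl | hkl
    · exact ((hWsq k i j).1.const_mul ((n : ℝ)⁻¹ * (n : ℝ)⁻¹)).congr
        (Filter.Eventually.of_forall fun ω => by ring)
    · exact (((hindepW i j k l hkl).integrable_mul (hWint k i j) (hWint l i j)).const_mul _)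
  -- value of each summand integral
  have hint_eval : ∀ (i j : Fin d) (k l : Fin n),
      (∫ ω, ((n : ℝ)⁻¹ * (n : ℝ)⁻¹) *
        ((X k ω i * X k ω j - m k i j) * (X l ω i * X l ω j - m l i j)) ∂P)
      = if k = l then ((n : ℝ)⁻¹ * (n : ℝ)⁻¹) *
          ((∫ y, (y i * y j) ^ 2 ∂μ k) - m k i j ^ 2) else 0 := by
    intro i j k l
    rw [integral_const_mul]
    rcases eq_or_ne k l with rfl | hkl
    · rw [if_pos rfl]
      congr 1
      rw [← (hWsq k i j).2]
      exact integral_congr_ae (Filter.Eventually.of_forall fun ω => (pow_two _).symm)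
    · rw [if_neg hkl, hcross i j k l hkl, mul_zero]
  -- the constant in the statement
  have hc : ∀ i j : Fin d, (if i = j then ((n : ℝ)⁻¹ * ∑ k, L k) / d else 0)
      = (n : ℝ)⁻¹ * ∑ k, m k i j := by
    intro i j
    rcases eq_or_ne i j with rfl | hij
    · simp [hm, Finset.sum_div, mul_div_assoc, Finset.mul_sum]
    · simp [hm, hij]
  -- pointwise expansion of the integrand
  have hpoint : ∀ ω : Ω, (∑ i, ∑ j,
        (((n : ℝ)⁻¹ * ∑ k, X k ω i * X k ω j) -
          (if i = j then ((n : ℝ)⁻¹ * ∑ k, L k) / d else 0)) ^ 2)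
      = ∑ i, ∑ j, ∑ k, ∑ l, ((n : ℝ)⁻¹ * (n : ℝ)⁻¹) *
          ((X k ω i * X k ω j - m k i j) * (X l ω i * X l ω j - m l i j)) := by
    intro ω
    refine Finset.sum_congr rfl fun i _ => Finset.sum_congr rfl fun j _ => ?_
    rw [hc i j]
    have hstep : ((n : ℝ)⁻¹ * ∑ k, X k ω i * X k ω j) - ((n : ℝ)⁻¹ * ∑ k, m k i j)
        = (n : ℝ)⁻¹ * ∑ k, (X k ω i * X k ω j - m k i j) := by
      rw [← mul_sub, ← Finset.sum_sub_distrib]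
    rw [hstep, pow_two, mul_mul_mul_comm, Finset.sum_mul_sum]
    simp only [Finset.mul_sum]
  -- swap integral and sums
  have hswap : (∫ ω, ∑ i, ∑ j, ∑ k, ∑ l, ((n : ℝ)⁻¹ * (n : ℝ)⁻¹) *
        ((X k ω i * X k ω j - m k i j) * (X l ω i * X l ω j - m l i j)) ∂P)
      = ∑ i, ∑ j, ∑ k, ∑ l, ∫ ω, ((n : ℝ)⁻¹ * (n : ℝ)⁻¹) *
        ((X k ω i * X k ω j - m k i j) * (X l ω i * X l ω j - m l i j)) ∂P := by
    rw [integral_finset_sum _ (fun i _ => integrable_finset_sum _ fun j _ =>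
      integrable_finset_sum _ fun k _ => integrable_finset_sum _ fun l _ =>
      hsummandint i j k l)]
    refine Finset.sum_congr rfl fun i _ => ?_
    rw [integral_finset_sum _ (fun j _ => integrable_finset_sum _ fun k _ =>
      integrable_finset_sum _ fun l _ => hsummandint i j k l)]
    refine Finset.sum_congr rfl fun j _ => ?_
    rw [integral_finset_sum _ (fun k _ => integrable_finset_sum _ fun l _ =>
      hsummandint i j k l)]
    refine Finset.sum_congr rfl fun k _ => ?_
    rw [integral_finset_sum _ (fun l _ => hsummandint i j k l)]
  -- the diagonal sums per k
  have hM : ∀ k : Fin n, ∑ i : Fin d, ∑ j : Fin d, m k i j ^ 2 = L k ^ 2 / d := by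
    intro k
    have h1 : ∀ i j : Fin d, m k i j ^ 2 = if i = j then (L k / d) ^ 2 else 0 := by
      intro i j
      simp only [hm]
      split <;> simp
    simp only [h1, Finset.sum_ite_eq, Finset.mem_univ, if_true]
    rw [Finset.sum_const, Finset.card_univ, Fintype.card_fin, nsmul_eq_mul]
    have hd' : (d : ℝ) ≠ 0 := Nat.cast_ne_zero.mpr hd.ne'
    field_simp
  have hQ : ∀ k : Fin n, ∑ i : Fin d, ∑ j : Fin d, (∫ y, (y i * y j) ^ 2 ∂μ k)
      = ∫ y, ‖y‖ ^ 4 ∂μ k := fun k => sum_int_sq (hmom k)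
  -- put everything together
  calc (∫ ω, ∑ i, ∑ j,
        (((n : ℝ)⁻¹ * ∑ k, X k ω i * X k ω j) -
          (if i = j then ((n : ℝ)⁻¹ * ∑ k, L k) / d else 0)) ^ 2 ∂P)
      = ∫ ω, ∑ i, ∑ j, ∑ k, ∑ l, ((n : ℝ)⁻¹ * (n : ℝ)⁻¹) *
          ((X k ω i * X k ω j - m k i j) * (X l ω i * X l ω j - m l i j)) ∂P :=
        integral_congr_ae (Filter.Eventually.of_forall hpoint)
    _ = ∑ i, ∑ j, ∑ k, ∑ l, ∫ ω, ((n : ℝ)⁻¹ * (n : ℝ)⁻¹) *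
          ((X k ω i * X k ω j - m k i j) * (X l ω i * X l ω j - m l i j)) ∂P := hswap
    _ = ∑ i : Fin d, ∑ j : Fin d, ∑ k : Fin n, ((n : ℝ)⁻¹ * (n : ℝ)⁻¹) *
          ((∫ y, (y i * y j) ^ 2 ∂μ k) - m k i j ^ 2) := by
        simp only [hint_eval, Finset.sum_ite_eq, Finset.mem_univ, if_true]
    _ = ∑ k : Fin n, ∑ i : Fin d, ∑ j : Fin d, ((n : ℝ)⁻¹ * (n : ℝ)⁻¹) *
          ((∫ y, (y i * y j) ^ 2 ∂μ k) - m k i j ^ 2) := by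
        have h1 : (∑ i : Fin d, ∑ j : Fin d, ∑ k : Fin n, ((n : ℝ)⁻¹ * (n : ℝ)⁻¹) *
              ((∫ y, (y i * y j) ^ 2 ∂μ k) - m k i j ^ 2))
            = ∑ i : Fin d, ∑ k : Fin n, ∑ j : Fin d, ((n : ℝ)⁻¹ * (n : ℝ)⁻¹) *
              ((∫ y, (y i * y j) ^ 2 ∂μ k) - m k i j ^ 2) :=
          Finset.sum_congr rfl fun i _ => Finset.sum_comm
        rw [h1]
        exact Finset.sum_comm
    _ = ∑ k : Fin n, ((n : ℝ)⁻¹ * (n : ℝ)⁻¹) *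
          ((∫ y, ‖y‖ ^ 4 ∂μ k) - L k ^ 2 / d) := by
        refine Finset.sum_congr rfl fun k _ => ?_
        rw [← hQ k, ← hM k]
        simp only [mul_sub]
        rw [Finset.mul_sum, Finset.mul_sum, ← Finset.sum_sub_distrib]
        refine Finset.sum_congr rfl fun i _ => ?_
        rw [Finset.mul_sum, Finset.mul_sum, ← Finset.sum_sub_distrib]
    _ = (n : ℝ)⁻¹ * (((n : ℝ)⁻¹ * ∑ k, ∫ y, ‖y‖ ^ 4 ∂μ k) -
          ((n : ℝ)⁻¹ * ∑ k, L k ^ 2) / d) := by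
        simp only [mul_sub]
        rw [Finset.sum_sub_distrib, ← Finset.mul_sum]
        have : ∑ k : Fin n, ((n : ℝ)⁻¹ * (n : ℝ)⁻¹) * (L k ^ 2 / d)
            = ((n : ℝ)⁻¹ * (n : ℝ)⁻¹) * ((∑ k, L k ^ 2) / d) := by
          rw [show ((n : ℝ)⁻¹ * (n : ℝ)⁻¹) * ((∑ k, L k ^ 2) / (d:ℝ))
              = ∑ k : Fin n, ((n : ℝ)⁻¹ * (n : ℝ)⁻¹) * (L k ^ 2 / d) from by
            rw [Finset.sum_div, Finset.mul_sum]]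
        rw [this]
        ring
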